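/- Suppose $f_{st} \ge \gamma > 0$ for all $s, t \in [n]$, $s \ne t$, and let $(V_1,\ldots,V_K)$ be any partition of $[n]$ with $|V_i| = n_i$. Let $L_n$ be the Laplacian with weights $f_{st}$ on $[n]$ and $L_{V_i}$ the Laplacian of the induced subgraph on $V_i$. Then $\frac{\prod_{i=1}^K \det(L_{V_i} + n_i^{-1}J)}{\det(L_n + n^{-1}J)} \le (n\gamma)^{-(K-1)}$. -/

import Mathlib

open Matrix Finset

/-- The weighted-graph Laplacian on `Fin n` with edge weights `f`. -/
def lap {n : ℕ} (f : Fin n → Fin n → ℝ) : Matrix (Fin n) (Fin n) ℝ :=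
  Matrix.of fun s t =>
    if s = t then ∑ u ∈ Finset.univ.erase s, f s u else -(f s t)

/-- The Laplacian of the induced weighted subgraph on a finset `S`. -/
def lapOn {n : ℕ} (f : Fin n → Fin n → ℝ) (S : Finset (Fin n)) :
    Matrix {x : Fin n // x ∈ S} {x : Fin n // x ∈ S} ℝ :=
  Matrix.of fun a b =>
    if (a : Fin n) = (b : Fin n) then ∑ u ∈ S.erase (a : Fin n), f a u
    else -(f a b)

/-- The all-ones matrix. -/
def Jmat (ι : Type*) : Matrix ι ι ℝ := Matrix.of fun _ _ => 1



lemma psd_det_nonneg {ι : Type*} [Fintype ι] [DecidableEq ι] {A : Matrix ι ι ℝ}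
    (hA : A.PosSemidef) : 0 ≤ A.det := by
  rw [hA.1.det_eq_prod_eigenvalues]
  exact Finset.prod_nonneg fun i _ => by exact_mod_cast hA.eigenvalues_nonneg i

lemma det_one_add_psd {ι : Type*} [Fintype ι] [DecidableEq ι] {M : Matrix ι ι ℝ}
    (hM : M.PosSemidef) : 1 ≤ (1 + M).det := by
  have h := hM.1.spectral_theorem
  rw [Unitary.conjStarAlgAut_apply] at h
  set U : Matrix ι ι ℝ := (hM.1.eigenvectorUnitary : Matrix ι ι ℝ)
  have hU : U * star U = 1 := Matrix.mem_unitaryGroup_iff.mp hM.1.eigenvectorUnitary.2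
  have key : 1 + M = U * (1 + diagonal (RCLike.ofReal ∘ hM.1.eigenvalues)) * star U := by
    rw [mul_add, add_mul, mul_one, hU, ← h]
  rw [key, Matrix.det_mul_right_comm, hU, one_mul]
  have : (1 : Matrix ι ι ℝ) + diagonal (RCLike.ofReal ∘ hM.1.eigenvalues)
      = diagonal (fun i => 1 + hM.1.eigenvalues i) := by
    rw [← diagonal_one, diagonal_add]
    congr 1
  rw [this, det_diagonal]
  calc (1:ℝ) = ∏ _i : ι, (1:ℝ) := by simp
    _ ≤ ∏ i, (1 + hM.1.eigenvalues i) :=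
      Finset.prod_le_prod (fun _ _ => zero_le_one)
        (fun i _ => by linarith [hM.eigenvalues_nonneg i])

open scoped MatrixOrder in
lemma det_mono {ι : Type*} [Fintype ι] [DecidableEq ι] {C A : Matrix ι ι ℝ}
    (hC : C.PosSemidef) (hAC : (A - C).PosSemidef) : C.det ≤ A.det := by
  have hA : A.PosSemidef := by simpa using hC.add hAC
  by_cases h0 : C.det = 0
  · rw [h0]; exact psd_det_nonneg hA
  · set S := CFC.sqrt C with hSdef
    have hS2 : S * S = C := CFC.sqrt_mul_sqrt_self C hC.nonneg
    have hSh : S.IsHermitian := (CFC.sqrt_nonneg C).posSemidef.1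
    have hdS : S.det ≠ 0 := fun h => h0 (by rw [← hS2, det_mul, h, mul_zero])
    have hSu : IsUnit S.det := isUnit_iff_ne_zero.mpr hdS
    set M := S⁻¹ * (A - C) * S⁻¹ with hMdef
    have hMpsd : M.PosSemidef := by
      have := hAC.mul_mul_conjTranspose_same S⁻¹
      rwa [conjTranspose_nonsing_inv, hSh.eq] at this
    have h1 : S * S⁻¹ = 1 := mul_nonsing_inv _ hSu
    have h2 : S⁻¹ * S = 1 := nonsing_inv_mul _ hSu
    have hSMS : S * M * S = A - C := by
      have : S * M * S = (S * S⁻¹) * ((A - C) * (S⁻¹ * S)) := by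
        simp only [hMdef, Matrix.mul_assoc]
      rw [this, h1, h2, one_mul, mul_one]
    have key : A = S * (1 + M) * S := by
      rw [mul_add, add_mul, mul_one, hS2, hSMS]; abel
    calc C.det ≤ C.det * (1 + M).det :=
          le_mul_of_one_le_right (psd_det_nonneg hC) (det_one_add_psd hMpsd)
      _ = A.det := by rw [key, det_mul, det_mul, ← hS2, det_mul]; ring


section blocks
variable {n K : ℕ} (f : Fin n → Fin n → ℝ) (V : Fin K → Finset (Fin n)) (blk : Fin n → Fin K)

def LbM : Matrix (Fin n) (Fin n) ℝ :=
  Matrix.of fun s t => if blk s = blk t then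
    (if s = t then ∑ u ∈ (V (blk s)).erase s, f s u else -(f s t)) else 0

noncomputable def PmM : Matrix (Fin n) (Fin n) ℝ :=
  Matrix.of fun s t => if blk s = blk t then ((V (blk s)).card : ℝ)⁻¹ else 0

variable {V blk}

lemma fiber_sum (hfil : ∀ k, univ.filter (fun s => blk s = k) = V k) (g : Fin n → ℝ) :
    ∑ s, g s = ∑ k, ∑ s ∈ V k, g s := by
  simp_rw [← hfil]
  exact (Finset.sum_fiberwise _ _ _).symm

lemma blk_eq_of_mem (hfil : ∀ k, univ.filter (fun s => blk s = k) = V k)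
    {s : Fin n} {k : Fin K} (h : s ∈ V k) : blk s = k := by
  rw [← hfil] at h; exact (mem_filter.mp h).2

lemma mem_V_iff (hfil : ∀ k, univ.filter (fun s => blk s = k) = V k)
    {s : Fin n} {k : Fin K} : s ∈ V k ↔ blk s = k := by
  rw [← hfil, mem_filter]; simp

lemma dot_expand (M : Matrix (Fin n) (Fin n) ℝ) (x : Fin n → ℝ) :
    x ⬝ᵥ M *ᵥ x = ∑ s, ∑ t, x s * (M s t * x t) := by
  simp [dotProduct, mulVec, Finset.mul_sum]

variable {f}

lemma qf_lap (x : Fin n → ℝ) :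
    x ⬝ᵥ (lap f) *ᵥ x = ∑ s, ∑ t, (if s = t then 0 else f s t) * (x s * (x s - x t)) := by
  rw [dot_expand]
  refine Finset.sum_congr rfl fun s _ => ?_
  rw [← Finset.add_sum_erase _ (fun t => x s * (lap f s t * x t)) (Finset.mem_univ s),
    ← Finset.add_sum_erase _
      (fun t => (if s = t then (0:ℝ) else f s t) * (x s * (x s - x t))) (Finset.mem_univ s)]
  rw [if_pos rfl, zero_mul, zero_add]
  have e3 : x s * (lap f s s * x s) = ∑ t ∈ univ.erase s, f s t * (x s * x s) := by
    rw [show lap f s s = ∑ u ∈ univ.erase s, f s u from by simp [lap], Finset.sum_mul,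
      Finset.mul_sum]
    exact Finset.sum_congr rfl fun t _ => by ring
  rw [e3, ← Finset.sum_add_distrib]
  refine Finset.sum_congr rfl fun t ht => ?_
  have hts : s ≠ t := fun h => (Finset.mem_erase.mp ht).1 h.symm
  rw [if_neg hts, show lap f s t = -(f s t) from by simp [lap, hts]]
  ring

lemma qf_Lb (hfil : ∀ k, univ.filter (fun s => blk s = k) = V k) (x : Fin n → ℝ) :
    x ⬝ᵥ (LbM f V blk) *ᵥ x
      = ∑ s, ∑ t, (if blk s = blk t ∧ s ≠ t then f s t else 0) * (x s * (x s - x t)) := by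
  rw [dot_expand]
  refine Finset.sum_congr rfl fun s _ => ?_
  rw [← Finset.add_sum_erase _ (fun t => x s * (LbM f V blk s t * x t)) (Finset.mem_univ s),
    ← Finset.add_sum_erase _
      (fun t => (if blk s = blk t ∧ s ≠ t then f s t else 0) * (x s * (x s - x t)))
      (Finset.mem_univ s)]
  have : ¬(blk s = blk s ∧ s ≠ s) := by simp
  rw [if_neg this, zero_mul, zero_add]
  have hset : (V (blk s)).erase s = (univ.erase s).filter (fun t => blk s = blk t) := by
    ext t
    simp only [Finset.mem_erase, Finset.mem_filter, Finset.mem_univ, true_and,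
      mem_V_iff hfil]
    aesop
  have e3 : x s * (LbM f V blk s s * x s)
      = ∑ t ∈ univ.erase s, (if blk s = blk t then f s t else 0) * (x s * x s) := by
    rw [show LbM f V blk s s = ∑ u ∈ (V (blk s)).erase s, f s u from by simp [LbM],
      hset, Finset.sum_filter, Finset.sum_mul, Finset.mul_sum]
    refine Finset.sum_congr rfl fun t _ => ?_
    split_ifs <;> ring
  rw [e3, ← Finset.sum_add_distrib]
  refine Finset.sum_congr rfl fun t ht => ?_
  have hts : s ≠ t := fun h => (Finset.mem_erase.mp ht).1 h.symm
  have hlb : LbM f V blk s t = (if blk s = blk t then -(f s t) else 0) := by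
    simp [LbM, hts]
  rw [hlb]
  split_ifs with h1 h2 h2 <;> simp_all <;> ring

lemma qf_Pm (hfil : ∀ k, univ.filter (fun s => blk s = k) = V k) (x : Fin n → ℝ) :
    x ⬝ᵥ (PmM V blk) *ᵥ x = ∑ k, ((V k).card : ℝ)⁻¹ * (∑ s ∈ V k, x s)^2 := by
  rw [dot_expand]
  have inner : ∀ s, ∑ t, x s * (PmM V blk s t * x t)
      = x s * (((V (blk s)).card : ℝ)⁻¹ * ∑ t ∈ V (blk s), x t) := by
    intro s
    have hset : V (blk s) = univ.filter (fun t => blk s = blk t) := by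
      ext t
      simp only [Finset.mem_filter, Finset.mem_univ, true_and, mem_V_iff hfil]
      exact ⟨fun h => h.symm, fun h => h.symm⟩
    rw [hset, Finset.sum_filter, Finset.mul_sum, Finset.mul_sum]
    refine Finset.sum_congr rfl fun t _ => ?_
    simp only [PmM, Matrix.of_apply]
    split_ifs with h
    · rw [← hset]
    · simp
  rw [Finset.sum_congr rfl fun s _ => inner s, fiber_sum hfil]
  refine Finset.sum_congr rfl fun k _ => ?_
  rw [Finset.sum_congr rfl (fun s hs => by rw [blk_eq_of_mem hfil hs]), ← Finset.sum_mul]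
  ring


lemma qf_J (x : Fin n → ℝ) :
    x ⬝ᵥ (Jmat (Fin n)) *ᵥ x = (∑ s, x s)^2 := by
  rw [dot_expand]
  simp only [Jmat, Matrix.of_apply, one_mul, ← Finset.mul_sum, ← Finset.sum_mul]
  rw [sq]

lemma sym_half (w : Fin n → Fin n → ℝ) (hw : ∀ s t, w s t = w t s) (x : Fin n → ℝ) :
    ∑ s, ∑ t, w s t * (x s * (x s - x t)) = (∑ s, ∑ t, w s t * (x s - x t)^2) / 2 := by
  have swap : ∑ s, ∑ t, w s t * (x t * (x t - x s))
      = ∑ s, ∑ t, w s t * (x s * (x s - x t)) := by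
    rw [Finset.sum_comm]
    exact Finset.sum_congr rfl fun a _ => Finset.sum_congr rfl fun b _ => by rw [hw]
  have h2 : ∑ s, ∑ t, w s t * (x s - x t)^2
      = ∑ s, ∑ t, (w s t * (x s * (x s - x t)) + w s t * (x t * (x t - x s))) := by
    refine Finset.sum_congr rfl fun s _ => Finset.sum_congr rfl fun t _ => by ring
  rw [h2]
  simp only [Finset.sum_add_distrib, swap]
  ring

lemma isHerm_of_symm {M : Matrix (Fin n) (Fin n) ℝ} (h : ∀ s t, M s t = M t s) :
    M.IsHermitian :=
  Matrix.ext fun i j => by simpa [conjTranspose_apply] using h j i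

lemma sum_sq_pairs (S : Finset (Fin n)) (x : Fin n → ℝ) :
    ∑ s ∈ S, ∑ t ∈ S, (x s - x t)^2
      = 2*((S.card : ℝ) * (∑ s ∈ S, x s^2) - (∑ s ∈ S, x s)^2) := by
  have hterm : ∀ s t, (x s - x t)^2 = x s^2 - 2*(x s*x t) + x t^2 := fun s t => by ring
  have inner : ∀ s, ∑ t ∈ S, (x s - x t)^2
      = (S.card : ℝ) * x s^2 - 2*(x s*(∑ t ∈ S, x t)) + ∑ t ∈ S, x t^2 := by
    intro s
    simp_rw [hterm, Finset.sum_add_distrib, Finset.sum_sub_distrib, Finset.sum_const,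
      ← Finset.mul_sum, nsmul_eq_mul]
  rw [Finset.sum_congr rfl fun s _ => inner s, Finset.sum_add_distrib,
    Finset.sum_sub_distrib, Finset.sum_const, ← Finset.mul_sum, nsmul_eq_mul]
  have hmid : ∑ s ∈ S, 2*(x s * ∑ t ∈ S, x t) = 2*((∑ s ∈ S, x s) * (∑ t ∈ S, x t)) := by
    rw [← Finset.mul_sum, ← Finset.sum_mul]
  rw [hmid]
  ring

lemma sum_ite_block (hfil : ∀ k, univ.filter (fun s => blk s = k) = V k)
    (s : Fin n) (g : Fin n → ℝ) :
    ∑ t, (if blk s = blk t then g t else 0) = ∑ t ∈ V (blk s), g t := by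
  have hset : V (blk s) = univ.filter (fun t => blk s = blk t) := by
    ext t
    simp only [Finset.mem_filter, Finset.mem_univ, true_and, mem_V_iff hfil]
    exact ⟨fun h => h.symm, fun h => h.symm⟩
  rw [hset, Finset.sum_filter]

lemma cs_blocks (hn : 0 < n) (hfil : ∀ k, univ.filter (fun s => blk s = k) = V k)
    (hne : ∀ k, (V k).Nonempty) (x : Fin n → ℝ) :
    (∑ s, x s)^2 ≤ (n:ℝ) * ∑ k, ((V k).card : ℝ)⁻¹ * (∑ s ∈ V k, x s)^2 := by
  have hpos : ∀ k, (0:ℝ) < ((V k).card : ℝ) := fun k => by exact_mod_cast (hne k).card_pos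
  have hcard : ∑ k, ((V k).card : ℝ) = n := by
    have h1 := (fiber_sum hfil (fun _ => (1:ℝ))).symm
    simpa using h1
  have hT : ∑ s, x s = ∑ k, ∑ s ∈ V k, x s := fiber_sum hfil x
  have key := Finset.sum_mul_sq_le_sq_mul_sq univ
    (fun k => Real.sqrt ((V k).card)) (fun k => (∑ s ∈ V k, x s) / Real.sqrt ((V k).card))
  have h1 : ∀ k, Real.sqrt ((V k).card) * ((∑ s ∈ V k, x s) / Real.sqrt ((V k).card))
      = ∑ s ∈ V k, x s := by
    intro k
    rw [mul_comm, div_mul_cancel₀ _ (Real.sqrt_ne_zero'.mpr (hpos k))]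
  have h2 : ∀ k, (Real.sqrt ((V k).card))^2 = ((V k).card : ℝ) := fun k =>
    Real.sq_sqrt (hpos k).le
  have h3 : ∀ k, ((∑ s ∈ V k, x s) / Real.sqrt ((V k).card))^2
      = ((V k).card : ℝ)⁻¹ * (∑ s ∈ V k, x s)^2 := by
    intro k
    rw [div_pow, h2, div_eq_inv_mul]
  rw [Finset.sum_congr rfl fun k _ => h1 k, Finset.sum_congr rfl fun k _ => h2 k,
    Finset.sum_congr rfl fun k _ => h3 k, hcard] at key
  rw [hT]
  exact key

lemma Pm_symm_entry {s t : Fin n} : PmM V blk s t = PmM V blk t s := by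
  by_cases h : blk s = blk t
  · simp only [PmM, Matrix.of_apply]
    rw [if_pos h, if_pos h.symm, h]
  · simp only [PmM, Matrix.of_apply]
    rw [if_neg h, if_neg (Ne.symm h)]

lemma lap_symm_entry (hsym : ∀ s t, f s t = f t s) {s t : Fin n} :
    lap f s t = lap f t s := by
  by_cases h : s = t
  · subst h; rfl
  · simp only [lap, Matrix.of_apply]
    rw [if_neg h, if_neg (Ne.symm h), hsym]

lemma Lb_symm_entry (hsym : ∀ s t, f s t = f t s) {s t : Fin n} :
    LbM f V blk s t = LbM f V blk t s := by
  simp only [LbM, Matrix.of_apply]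
  by_cases hb : blk s = blk t
  · rw [if_pos hb, if_pos hb.symm]
    by_cases hst : s = t
    · subst hst; rfl
    · rw [if_neg hst, if_neg (Ne.symm hst), hsym]
  · rw [if_neg hb, if_neg (Ne.symm hb)]

lemma star_eq (x : Fin n → ℝ) : star x = x := by
  funext i
  simp

lemma Lb_psd (hfil : ∀ k, univ.filter (fun s => blk s = k) = V k)
    (hsym : ∀ s t, f s t = f t s) (hw : ∀ s t, s ≠ t → 0 ≤ f s t) :
    (LbM f V blk).PosSemidef := by
  refine Matrix.PosSemidef.of_dotProduct_mulVec_nonneg ?_ ?_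
  · exact isHerm_of_symm fun s t => Lb_symm_entry hsym
  · intro x
    rw [star_eq, qf_Lb hfil x, sym_half _ ?hws x]
    case hws =>
      intro s t
      by_cases hb : blk s = blk t
      · by_cases hst : s = t
        · subst hst; rfl
        · rw [if_pos ⟨hb, hst⟩, if_pos ⟨hb.symm, Ne.symm hst⟩, hsym]
      · rw [if_neg (fun h => hb h.1), if_neg (fun h => hb (h.1).symm)]
    apply div_nonneg _ (by norm_num)
    refine Finset.sum_nonneg fun s _ => Finset.sum_nonneg fun t _ => ?_
    split_ifs with h
    · exact mul_nonneg (hw s t h.2) (sq_nonneg _)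
    · simp

lemma Rm_psd (hn : 0 < n) (hfil : ∀ k, univ.filter (fun s => blk s = k) = V k)
    (hne : ∀ k, (V k).Nonempty) :
    (PmM V blk - ((n:ℝ))⁻¹ • Jmat (Fin n)).PosSemidef := by
  have hn' : (0:ℝ) < n := by exact_mod_cast hn
  refine Matrix.PosSemidef.of_dotProduct_mulVec_nonneg ?_ ?_
  · refine isHerm_of_symm fun s t => ?_
    simp only [Matrix.sub_apply, Matrix.smul_apply, smul_eq_mul, Jmat, Matrix.of_apply]
    rw [Pm_symm_entry]
  · intro x
    rw [star_eq]
    rw [sub_mulVec, dotProduct_sub, smul_mulVec, dotProduct_smul, smul_eq_mul,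
      qf_Pm hfil x, qf_J x]
    have := cs_blocks hn hfil hne x
    rw [sub_nonneg, inv_mul_le_iff₀ hn']
    exact this

lemma cross_psd {γ : ℝ} (hn : 0 < n) (hγ : 0 < γ)
    (hsym : ∀ s t, f s t = f t s) (hge : ∀ s t : Fin n, s ≠ t → γ ≤ f s t)
    (hfil : ∀ k, univ.filter (fun s => blk s = k) = V k)
    (hne : ∀ k, (V k).Nonempty) :
    ((lap f - LbM f V blk) - (((n:ℝ))*γ) • (PmM V blk - ((n:ℝ))⁻¹ • Jmat (Fin n))).PosSemidef := by
  have hn' : (0:ℝ) < n := by exact_mod_cast hn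
  refine Matrix.PosSemidef.of_dotProduct_mulVec_nonneg ?_ ?_
  · refine isHerm_of_symm fun s t => ?_
    simp only [Matrix.sub_apply, Matrix.smul_apply, smul_eq_mul, Jmat, Matrix.of_apply]
    rw [Pm_symm_entry, lap_symm_entry hsym, Lb_symm_entry hsym]
  · intro x
    rw [star_eq]
    rw [sub_mulVec, dotProduct_sub, smul_mulVec, dotProduct_smul, smul_eq_mul,
      sub_mulVec, dotProduct_sub, sub_mulVec, dotProduct_sub, smul_mulVec,
      dotProduct_smul, smul_eq_mul, qf_lap x, qf_Lb hfil x, qf_Pm hfil x, qf_J x]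
    set T := ∑ s, x s with hT
    set τ := ∑ s, (x s)^2 with hτ
    set p := ∑ k, ((V k).card : ℝ)⁻¹ * (∑ s ∈ V k, x s)^2 with hp
    set a := ∑ k, ((V k).card : ℝ) * (∑ s ∈ V k, (x s)^2) with ha
    set b := ∑ k, (∑ s ∈ V k, x s)^2 with hb
    set Wc := ∑ s, ∑ t, (if blk s = blk t then (0:ℝ) else f s t) * (x s - x t)^2 with hWc
    set W1 := ∑ s, ∑ t, (if blk s = blk t then (0:ℝ) else (x s - x t)^2) with hW1
    have hcardpos : ∀ k, (0:ℝ) < ((V k).card : ℝ) := fun k => by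
      exact_mod_cast (hne k).card_pos
    -- difference of the two Laplacian quadratic forms
    have L1 : (∑ s, ∑ t, (if s = t then (0:ℝ) else f s t) * (x s * (x s - x t)))
        - (∑ s, ∑ t, (if blk s = blk t ∧ s ≠ t then f s t else 0) * (x s * (x s - x t)))
        = ∑ s, ∑ t, (if blk s = blk t then (0:ℝ) else f s t) * (x s * (x s - x t)) := by
      rw [← Finset.sum_sub_distrib]
      refine Finset.sum_congr rfl fun s _ => ?_
      rw [← Finset.sum_sub_distrib]
      refine Finset.sum_congr rfl fun t _ => ?_
      by_cases h1 : s = t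
      · subst h1; simp
      · by_cases h2 : blk s = blk t
        · rw [if_neg h1, if_pos (show blk s = blk t ∧ s ≠ t from ⟨h2, h1⟩), if_pos h2]
          ring
        · rw [if_neg h1, if_neg (show ¬(blk s = blk t ∧ s ≠ t) from fun h => h2 h.1),
            if_neg h2]
          ring
    have hwsym : ∀ s t, (if blk s = blk t then (0:ℝ) else f s t)
        = (if blk t = blk s then (0:ℝ) else f t s) := by
      intro s t
      by_cases h : blk s = blk t
      · rw [if_pos h, if_pos h.symm]
      · rw [if_neg h, if_neg (Ne.symm h), hsym]
    have L2 : (∑ s, ∑ t, (if s = t then (0:ℝ) else f s t) * (x s * (x s - x t)))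
        - (∑ s, ∑ t, (if blk s = blk t ∧ s ≠ t then f s t else 0) * (x s * (x s - x t)))
        = Wc / 2 := by
      rw [L1, sym_half _ (fun s t => hwsym s t) x]
    have L3 : γ * W1 ≤ Wc := by
      rw [hW1, hWc, Finset.mul_sum]
      refine Finset.sum_le_sum fun s _ => ?_
      rw [Finset.mul_sum]
      refine Finset.sum_le_sum fun t _ => ?_
      by_cases h : blk s = blk t
      · simp [h]
      · rw [if_neg h, if_neg h]
        have hst : s ≠ t := fun hh => h (congrArg blk hh)
        exact mul_le_mul_of_nonneg_right (hge s t hst) (sq_nonneg _)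
    have L5 : ∑ s, ∑ t, (x s - x t)^2 = 2*((n:ℝ)*τ - T^2) := by
      have := sum_sq_pairs (univ : Finset (Fin n)) x
      simpa [Finset.card_univ] using this
    have L6 : ∑ s, ∑ t, (if blk s = blk t then (x s - x t)^2 else (0:ℝ))
        = ∑ k, 2*(((V k).card : ℝ) * (∑ s ∈ V k, (x s)^2) - (∑ s ∈ V k, x s)^2) := by
      have step1 : ∀ s, ∑ t, (if blk s = blk t then (x s - x t)^2 else (0:ℝ))
          = ∑ t ∈ V (blk s), (x s - x t)^2 := fun s => sum_ite_block hfil s _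
      rw [Finset.sum_congr rfl fun s _ => step1 s,
        fiber_sum hfil (fun s => ∑ t ∈ V (blk s), (x s - x t)^2)]
      refine Finset.sum_congr rfl fun k _ => ?_
      rw [Finset.sum_congr rfl (fun s hs => by rw [blk_eq_of_mem hfil hs])]
      exact sum_sq_pairs (V k) x
    have L4 : W1 = 2*((n:ℝ)*τ - T^2) - (2*a - 2*b) := by
      have hsplit : W1 = (∑ s, ∑ t, (x s - x t)^2)
          - ∑ s, ∑ t, (if blk s = blk t then (x s - x t)^2 else (0:ℝ)) := by
        rw [hW1, ← Finset.sum_sub_distrib]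
        refine Finset.sum_congr rfl fun s _ => ?_
        rw [← Finset.sum_sub_distrib]
        refine Finset.sum_congr rfl fun t _ => ?_
        split_ifs <;> ring
      rw [hsplit, L5, L6]
      have hab : ∑ k, 2*(((V k).card : ℝ) * (∑ s ∈ V k, (x s)^2) - (∑ s ∈ V k, x s)^2)
          = 2*a - 2*b := by
        rw [ha, hb, Finset.mul_sum, Finset.mul_sum, ← Finset.sum_sub_distrib]
        exact Finset.sum_congr rfl fun k _ => by ring
      rw [hab]
    have L7 : ∀ k, (∑ s ∈ V k, x s)^2 ≤ ((V k).card : ℝ) * ∑ s ∈ V k, (x s)^2 := by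
      intro k
      exact sq_sum_le_card_mul_sum_sq
    have L8 : ∀ k, ((V k).card : ℝ) ≤ (n:ℝ) := by
      intro k
      have := Finset.card_le_univ (V k)
      simp only [Finset.card_univ, Fintype.card_fin] at this
      exact_mod_cast this
    have L9 : 0 ≤ ∑ k, ((n:ℝ) - ((V k).card:ℝ))
        * ((∑ s ∈ V k, (x s)^2) - ((V k).card:ℝ)⁻¹ * (∑ s ∈ V k, x s)^2) := by
      refine Finset.sum_nonneg fun k _ => mul_nonneg (by linarith [L8 k]) ?_
      rw [sub_nonneg, inv_mul_le_iff₀ (hcardpos k)]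
      exact L7 k
    have L10 : ∑ k, ((n:ℝ) - ((V k).card:ℝ))
        * ((∑ s ∈ V k, (x s)^2) - ((V k).card:ℝ)⁻¹ * (∑ s ∈ V k, x s)^2)
        = (n:ℝ)*τ - a + b - (n:ℝ)*p := by
      have hτf : τ = ∑ k, ∑ s ∈ V k, (x s)^2 := fiber_sum hfil _
      have hterm : ∀ k, ((n:ℝ) - ((V k).card:ℝ))
          * ((∑ s ∈ V k, (x s)^2) - ((V k).card:ℝ)⁻¹ * (∑ s ∈ V k, x s)^2)
          = (n:ℝ)*(∑ s ∈ V k, (x s)^2) - ((V k).card:ℝ)*(∑ s ∈ V k, (x s)^2)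
            + (∑ s ∈ V k, x s)^2
            - (n:ℝ)*(((V k).card:ℝ)⁻¹ * (∑ s ∈ V k, x s)^2) := by
        intro k
        linear_combination (∑ s ∈ V k, x s)^2 * (mul_inv_cancel₀ (ne_of_gt (hcardpos k)))
      rw [Finset.sum_congr rfl fun k _ => hterm k, hτf, hp, ha, hb]
      simp only [Finset.sum_sub_distrib, Finset.sum_add_distrib, ← Finset.mul_sum]
    have hnne : (n:ℝ) ≠ 0 := ne_of_gt hn'
    have h6 : 0 ≤ γ * ((n:ℝ)*τ - a + b - (n:ℝ)*p) :=
      mul_nonneg hγ.le (by rw [← L10]; exact L9)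
    have h5 : γ * W1 = 2*γ*((n:ℝ)*τ - T^2) - γ*(2*a - 2*b) := by rw [L4]; ring
    have hgoal_rw : (n:ℝ)*γ*(p - (n:ℝ)⁻¹*T^2) = (n:ℝ)*γ*p - γ*T^2 := by
      rw [mul_sub, show (n:ℝ)*γ*((n:ℝ)⁻¹*T^2) = ((n:ℝ)*(n:ℝ)⁻¹)*(γ*T^2) from by ring,
        mul_inv_cancel₀ hnne, one_mul]
    rw [L2, hgoal_rw]
    linarith [L3, h5, h6]

lemma det_one_add_smul_J (ι : Type*) [Fintype ι] [DecidableEq ι] (d : ℝ) :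
    (1 + d • Jmat ι).det = 1 + d * (Fintype.card ι) := by
  have h : d • Jmat ι = Matrix.replicateCol Unit (fun _ => d) * Matrix.replicateRow Unit (fun _ => (1:ℝ)) := by
    ext i j
    simp [Jmat, Matrix.mul_apply]
  rw [h, Matrix.det_one_add_replicateCol_mul_replicateRow]
  simp only [dotProduct, one_mul, Finset.sum_const, Finset.card_univ, nsmul_eq_mul]
  ring

lemma det_blockish (M : Matrix (Fin n) (Fin n) ℝ)
    (h : ∀ s t, blk s ≠ blk t → M s t = 0) :
    M.det = ∏ k, (M.toSquareBlock blk k).det := by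
  apply Matrix.BlockTriangular.det_fintype
  intro i j hlt
  exact h i j (ne_of_gt hlt)

lemma row_vanish (hfil : ∀ k, univ.filter (fun s => blk s = k) = V k)
    {s u : Fin n} (h : u ∉ V (blk s)) : (LbM f V blk + PmM V blk) s u = 0 := by
  have hb : blk s ≠ blk u := fun e => h ((mem_V_iff hfil).mpr e.symm)
  simp [LbM, PmM, Matrix.add_apply, hb]

lemma Pm_vanish (hfil : ∀ k, univ.filter (fun s => blk s = k) = V k)
    {s u : Fin n} (h : u ∉ V (blk s)) : PmM V blk s u = 0 := by
  have hb : blk s ≠ blk u := fun e => h ((mem_V_iff hfil).mpr e.symm)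
  simp [PmM, hb]

lemma row_sum_one (hfil : ∀ k, univ.filter (fun s => blk s = k) = V k)
    (hblk : ∀ i, i ∈ V (blk i)) (s : Fin n) :
    ∑ u ∈ V (blk s), (LbM f V blk + PmM V blk) s u = 1 := by
  have hmem : s ∈ V (blk s) := hblk s
  have hcpos : (0:ℝ) < ((V (blk s)).card : ℝ) := by
    exact_mod_cast Finset.card_pos.mpr ⟨s, hmem⟩
  have hentry : ∀ u ∈ V (blk s), (LbM f V blk + PmM V blk) s u
      = (if s = u then ∑ v ∈ (V (blk s)).erase s, f s v else -(f s u))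
        + ((V (blk s)).card : ℝ)⁻¹ := by
    intro u hu
    have hb : blk s = blk u := (blk_eq_of_mem hfil hu).symm
    simp [LbM, PmM, Matrix.add_apply, hb]
  rw [Finset.sum_congr rfl hentry, Finset.sum_add_distrib, Finset.sum_const, nsmul_eq_mul]
  have h1 : ∑ u ∈ V (blk s),
      (if s = u then ∑ v ∈ (V (blk s)).erase s, f s v else -(f s u)) = 0 := by
    rw [← Finset.add_sum_erase _ _ hmem, if_pos rfl]
    have : ∀ u ∈ (V (blk s)).erase s,
        (if s = u then ∑ v ∈ (V (blk s)).erase s, f s v else -(f s u)) = -(f s u) := by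
      intro u hu
      rw [if_neg (fun e => (Finset.mem_erase.mp hu).1 e.symm)]
    rw [Finset.sum_congr rfl this, Finset.sum_neg_distrib]
    ring
  rw [h1, zero_add, mul_inv_cancel₀ (ne_of_gt hcpos)]

lemma sum_restrict_block (hfil : ∀ k, univ.filter (fun s => blk s = k) = V k)
    (s : Fin n) (g : Fin n → ℝ) (hg : ∀ u, u ∉ V (blk s) → g u = 0) :
    ∑ u, g u = ∑ u ∈ V (blk s), g u :=
  (Finset.sum_subset (Finset.subset_univ (V (blk s))) (fun u _ hu => hg u hu)).symm

lemma Bm_mul_Pm (hfil : ∀ k, univ.filter (fun s => blk s = k) = V k)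
    (hblk : ∀ i, i ∈ V (blk i)) :
    (LbM f V blk + PmM V blk) * PmM V blk = PmM V blk := by
  ext s t
  rw [Matrix.mul_apply]
  rw [sum_restrict_block hfil s _
    (fun u hu => by rw [row_vanish hfil hu, zero_mul])]
  by_cases h : blk s = blk t
  · have hentry : ∀ u ∈ V (blk s), (LbM f V blk + PmM V blk) s u * PmM V blk u t
        = (LbM f V blk + PmM V blk) s u * ((V (blk s)).card : ℝ)⁻¹ := by
      intro u hu
      have hb : blk u = blk s := blk_eq_of_mem hfil hu
      have : PmM V blk u t = ((V (blk s)).card : ℝ)⁻¹ := by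
        simp only [PmM, Matrix.of_apply]
        rw [if_pos (hb.trans h), hb]
      rw [this]
    rw [Finset.sum_congr rfl hentry, ← Finset.sum_mul, row_sum_one hfil hblk s, one_mul]
    simp [PmM, h]
  · have hzero : ∀ u ∈ V (blk s), (LbM f V blk + PmM V blk) s u * PmM V blk u t = 0 := by
      intro u hu
      have hb : blk u = blk s := blk_eq_of_mem hfil hu
      have : PmM V blk u t = 0 := by
        simp only [PmM, Matrix.of_apply]
        rw [if_neg (fun e => h (hb.symm.trans e))]
      rw [this, mul_zero]
    rw [Finset.sum_congr rfl hzero, Finset.sum_const_zero]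
    simp [PmM, h]

lemma Bm_mul_J (hfil : ∀ k, univ.filter (fun s => blk s = k) = V k)
    (hblk : ∀ i, i ∈ V (blk i)) :
    (LbM f V blk + PmM V blk) * Jmat (Fin n) = Jmat (Fin n) := by
  ext s t
  rw [Matrix.mul_apply]
  have : ∀ u, (LbM f V blk + PmM V blk) s u * Jmat (Fin n) u t
      = (LbM f V blk + PmM V blk) s u := by
    intro u
    simp [Jmat]
  rw [Finset.sum_congr rfl fun u _ => this u,
    sum_restrict_block hfil s _ (fun u hu => row_vanish hfil hu),
    row_sum_one hfil hblk s]
  simp [Jmat]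

lemma Pm_mul_J (hfil : ∀ k, univ.filter (fun s => blk s = k) = V k)
    (hblk : ∀ i, i ∈ V (blk i)) :
    PmM V blk * Jmat (Fin n) = Jmat (Fin n) := by
  ext s t
  rw [Matrix.mul_apply]
  have h1 : ∀ u, PmM V blk s u * Jmat (Fin n) u t = PmM V blk s u := by
    intro u
    simp [Jmat]
  have hcpos : (0:ℝ) < ((V (blk s)).card : ℝ) := by
    exact_mod_cast Finset.card_pos.mpr ⟨s, hblk s⟩
  rw [Finset.sum_congr rfl fun u _ => h1 u,
    sum_restrict_block hfil s _ (fun u hu => Pm_vanish hfil hu)]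
  have h2 : ∀ u ∈ V (blk s), PmM V blk s u = ((V (blk s)).card : ℝ)⁻¹ := by
    intro u hu
    simp [PmM, (blk_eq_of_mem hfil hu).symm]
  rw [Finset.sum_congr rfl h2, Finset.sum_const, nsmul_eq_mul,
    mul_inv_cancel₀ (ne_of_gt hcpos)]
  simp [Jmat]

lemma card_blk_subtype (hfil : ∀ k, univ.filter (fun s => blk s = k) = V k) (k : Fin K) :
    Fintype.card {i // blk i = k} = (V k).card := by
  rw [Fintype.card_subtype, hfil]

lemma det_one_add_smul_Pm (hfil : ∀ k, univ.filter (fun s => blk s = k) = V k)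
    (hne : ∀ k, (V k).Nonempty) (c : ℝ) :
    (1 + c • PmM V blk).det = (1+c)^K := by
  rw [det_blockish (blk := blk) _ ?hoff]
  case hoff =>
    intro s t h
    have hst : s ≠ t := fun e => h (congrArg blk e)
    simp [Matrix.one_apply_ne hst, PmM, h]
  have hblockdet : ∀ k, ((1 + c • PmM V blk).toSquareBlock blk k).det = 1 + c := by
    intro k
    have hcpos : (0:ℝ) < ((V k).card : ℝ) := by exact_mod_cast (hne k).card_pos
    have heq : (1 + c • PmM V blk).toSquareBlock blk k
        = 1 + (c * ((V k).card : ℝ)⁻¹) • Jmat {i // blk i = k} := by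
      ext a b
      obtain ⟨a, ha⟩ := a
      obtain ⟨b, hb⟩ := b
      simp only [Matrix.toSquareBlock_def, Matrix.add_apply, Matrix.smul_apply,
        Matrix.of_apply, PmM, Jmat, smul_eq_mul, mul_one]
      have hab : blk a = blk b := ha.trans hb.symm
      rw [if_pos hab, ha]
      by_cases hst : a = b
      · subst hst
        rw [Matrix.one_apply_eq, Matrix.one_apply_eq]
      · rw [Matrix.one_apply_ne hst, Matrix.one_apply_ne (by simp [Subtype.ext_iff, hst])]
    rw [heq, det_one_add_smul_J, card_blk_subtype hfil k,
      mul_assoc, inv_mul_cancel₀ (ne_of_gt hcpos), mul_one]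
  rw [Finset.prod_congr rfl fun k _ => hblockdet k, Finset.prod_const, Finset.card_univ,
    Fintype.card_fin]

lemma prod_det_eq (hfil : ∀ k, univ.filter (fun s => blk s = k) = V k) :
    ∏ k, (lapOn f (V k) + (((V k).card : ℝ))⁻¹ • Jmat {x // x ∈ V k}).det
      = (LbM f V blk + PmM V blk).det := by
  rw [det_blockish (blk := blk) _ (fun s t h => by simp [LbM, PmM, Matrix.add_apply, h])]
  refine Finset.prod_congr rfl fun k _ => ?_
  let e : {i // blk i = k} ≃ {x : Fin n // x ∈ V k} :=
    Equiv.subtypeEquivRight (fun i => (mem_V_iff hfil).symm)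
  rw [← Matrix.det_submatrix_equiv_self e
    (lapOn f (V k) + (((V k).card : ℝ))⁻¹ • Jmat {x // x ∈ V k})]
  congr 1
  ext a b
  obtain ⟨a, ha⟩ := a
  obtain ⟨b, hb⟩ := b
  have hab : blk a = blk b := ha.trans hb.symm
  simp only [Matrix.toSquareBlock_def, Matrix.submatrix_apply, Matrix.add_apply,
    Matrix.smul_apply, Matrix.of_apply, LbM, PmM, lapOn, Jmat, smul_eq_mul, mul_one,
    Equiv.subtypeEquivRight_apply]
  rw [if_pos hab, ha]
  have hcoe1 : ((e ⟨a, ha⟩ : {x // x ∈ V k}) : Fin n) = a := rfl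
  have hcoe2 : ((e ⟨b, hb⟩ : {x // x ∈ V k}) : Fin n) = b := rfl
  rw [hcoe1, hcoe2, if_pos hb.symm]

lemma psd_smul {M : Matrix (Fin n) (Fin n) ℝ} (h : M.PosSemidef) {r : ℝ} (hr : 0 ≤ r) :
    (r • M).PosSemidef := by
  have hsymm : ∀ s t, M s t = M t s := by
    intro s t
    have h2 := congrFun (congrFun h.1 t) s
    simpa [conjTranspose_apply] using h2
  refine Matrix.PosSemidef.of_dotProduct_mulVec_nonneg ?_ ?_
  · exact isHerm_of_symm fun s t => by simp [Matrix.smul_apply, hsymm s t]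
  · intro x
    rw [smul_mulVec, dotProduct_smul, smul_eq_mul]
    exact mul_nonneg hr (h.dotProduct_mulVec_nonneg x)

lemma J_psd : (Jmat (Fin n)).PosSemidef := by
  refine Matrix.PosSemidef.of_dotProduct_mulVec_nonneg ?_ ?_
  · exact isHerm_of_symm fun s t => rfl
  · intro x
    rw [star_eq, qf_J]
    positivity

end blocks


/-- if all edge weights satisfy `f s t ≥ γ > 0`, then for any partition
`(V i)` of `[n]` into `K` blocks,
`(∏ i det (L_{V i} + n_i⁻¹ J)) / det (Lₙ + n⁻¹ J) ≤ (n γ)^{-(K-1)}`. -/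
theorem ratio_det_blocks_le {n K : ℕ} (hn : 0 < n) (hK : 0 < K)
    (γ : ℝ) (hγ : 0 < γ) (f : Fin n → Fin n → ℝ)
    (hsym : ∀ s t, f s t = f t s)
    (hge : ∀ s t : Fin n, s ≠ t → γ ≤ f s t)
    (V : Fin K → Finset (Fin n))
    (hdisj : ∀ k l, k ≠ l → Disjoint (V k) (V l))
    (hcover : ∀ i, ∃ k, i ∈ V k)
    (hne : ∀ k, (V k).Nonempty) :
    (∏ k, (lapOn f (V k) + (((V k).card : ℝ))⁻¹ • Jmat _).det) /
        (lap f + ((n : ℝ))⁻¹ • Jmat (Fin n)).det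
      ≤ (((n : ℝ) * γ) ^ (K - 1))⁻¹ := by
  classical
  choose blk hblk using hcover
  have hfil : ∀ k, univ.filter (fun s => blk s = k) = V k := by
    intro k
    ext s
    simp only [mem_filter, mem_univ, true_and]
    constructor
    · rintro rfl
      exact hblk s
    · intro hs
      by_contra hne'
      exact (Finset.disjoint_left.mp (hdisj _ _ hne') (hblk s)) hs
  have hn' : (0:ℝ) < n := by exact_mod_cast hn
  have hγn : (0:ℝ) < (n:ℝ)*γ := mul_pos hn' hγ
  set Bm := LbM f V blk + PmM V blk with hBm
  set Rm := PmM V blk - ((n:ℝ))⁻¹ • Jmat (Fin n) with hRm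
  set c := (n:ℝ)*γ - 1 with hc
  have h1c : 1 + c = (n:ℝ)*γ := by rw [hc]; ring
  have h1cne : (1:ℝ) + c ≠ 0 := by rw [h1c]; exact ne_of_gt hγn
  set A := lap f + ((n:ℝ))⁻¹ • Jmat (Fin n) with hA
  set Cm := Bm + c • Rm with hCm
  have hprod := prod_det_eq (f := f) hfil
  have hBR : Bm * Rm = Rm := by
    rw [hRm, Matrix.mul_sub, Matrix.mul_smul, hBm, Bm_mul_Pm hfil hblk, Bm_mul_J hfil hblk]
  have hfact : Cm = Bm * (1 + c • Rm) := by
    rw [Matrix.mul_add, Matrix.mul_one, Matrix.mul_smul, hBR, hCm]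
  set d := -c/(1+c) with hd
  have hdc : d + c*d = -c := by
    rw [hd]
    field_simp
    ring
  have hfact2 : (1 + c • PmM V blk) * (1 + d • (((n:ℝ))⁻¹ • Jmat (Fin n)))
      = 1 + c • Rm := by
    have hPQ : PmM V blk * (d • (((n:ℝ))⁻¹ • Jmat (Fin n)))
        = d • (((n:ℝ))⁻¹ • Jmat (Fin n)) := by
      rw [Matrix.mul_smul, Matrix.mul_smul, Pm_mul_J hfil hblk]
    rw [Matrix.mul_add, Matrix.mul_one, Matrix.add_mul, Matrix.one_mul, Matrix.smul_mul,
      hPQ, hRm, smul_sub]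
    have h4 : d • (((n:ℝ))⁻¹ • Jmat (Fin n)) + c • d • (((n:ℝ))⁻¹ • Jmat (Fin n))
        = -(c • (((n:ℝ))⁻¹ • Jmat (Fin n))) := by
      ext i j
      simp only [Matrix.add_apply, Matrix.smul_apply, Matrix.neg_apply, Jmat,
        Matrix.of_apply, smul_eq_mul, mul_one]
      linear_combination ((n:ℝ))⁻¹ * hdc
    rw [show (1:Matrix (Fin n) (Fin n) ℝ) + c • PmM V blk
        + (d • (((n:ℝ))⁻¹ • Jmat (Fin n)) + c • d • (((n:ℝ))⁻¹ • Jmat (Fin n)))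
        = 1 + c • PmM V blk + -(c • (((n:ℝ))⁻¹ • Jmat (Fin n))) from by rw [h4]]
    abel
  have hdetRm : (1 + c • Rm).det = ((n:ℝ)*γ)^(K-1) := by
    have hdm := congrArg Matrix.det hfact2
    rw [Matrix.det_mul, det_one_add_smul_Pm hfil hne c, smul_smul, det_one_add_smul_J,
      Fintype.card_fin] at hdm
    have h2 : 1 + d * ((n:ℝ))⁻¹ * n = ((n:ℝ)*γ)⁻¹ := by
      rw [mul_assoc, inv_mul_cancel₀ (ne_of_gt hn'), mul_one, hd, ← h1c]
      field_simp
      ring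
    rw [h2] at hdm
    rw [← hdm, h1c]
    have hK1 : K - 1 + 1 = K := Nat.succ_pred_eq_of_pos hK
    rw [show ((n:ℝ)*γ)^K = ((n:ℝ)*γ)^(K-1) * ((n:ℝ)*γ) from by rw [← pow_succ, hK1],
      mul_assoc, mul_inv_cancel₀ (ne_of_gt hγn), mul_one]
  have hCalt : Cm = LbM f V blk + ((n:ℝ))⁻¹ • Jmat (Fin n) + ((n:ℝ)*γ) • Rm := by
    rw [hCm, hBm, ← h1c, add_smul, one_smul]
    have : PmM V blk = Rm + ((n:ℝ))⁻¹ • Jmat (Fin n) := by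
      rw [hRm, sub_add_cancel]
    rw [this]
    abel
  have hw : ∀ s t : Fin n, s ≠ t → 0 ≤ f s t := fun s t h => le_trans hγ.le (hge s t h)
  have hCpsd : Cm.PosSemidef := by
    rw [hCalt]
    exact ((Lb_psd hfil hsym hw).add (psd_smul J_psd (inv_nonneg.mpr hn'.le))).add
      (psd_smul (hRm ▸ Rm_psd hn hfil hne) hγn.le)
  have hACdiff : (A - Cm).PosSemidef := by
    have hrewr : A - Cm = (lap f - LbM f V blk) - ((n:ℝ)*γ) • Rm := by
      rw [hA, hCalt]
      abel
    rw [hrewr, hRm]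
    exact cross_psd hn hγ hsym hge hfil hne
  have hmono : Cm.det ≤ A.det := det_mono hCpsd hACdiff
  have hApsd : A.PosSemidef := by simpa using hCpsd.add hACdiff
  have hdetC : Cm.det = ((n:ℝ)*γ)^(K-1) * Bm.det := by
    rw [hfact, Matrix.det_mul, hdetRm]
    ring
  have hpowpos : (0:ℝ) < ((n:ℝ)*γ)^(K-1) := pow_pos hγn _
  rw [hprod]
  by_cases hA0 : A.det = 0
  · rw [hA0, div_zero]
    positivity
  · have hApos : 0 < A.det := lt_of_le_of_ne (psd_det_nonneg hApsd) (Ne.symm hA0)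
    rw [div_le_iff₀ hApos]
    have hkey : ((n:ℝ)*γ)^(K-1) * Bm.det ≤ A.det := hdetC ▸ hmono
    calc Bm.det = (((n:ℝ)*γ)^(K-1))⁻¹ * (((n:ℝ)*γ)^(K-1) * Bm.det) := by
          field_simp
      _ ≤ (((n:ℝ)*γ)^(K-1))⁻¹ * A.det :=
          mul_le_mul_of_nonneg_left hkey (inv_nonneg.mpr hpowpos.le)
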